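/- Time-localized soundness of forward-propagating programs: in a forward-propagating temporal program P with stream S, the truth value of any ground atom a(x, t) in the perfect model of P ∪ S depends only on the facts of S with time-stamp ≤ t. Formally, if S and S′ are two streams that agree on all facts with time-stamp at most t, then for every ground atom a(x, t′) with t′ ≤ t, a(x, t′) is in the perfect model of P ∪ S iff it is in the perfect model of P ∪ S′. -/
import Mathlib


/-- A ground rule over atoms of type `A`. -/
structure GRule (A : Type) where
  head : A
  pos : List A
  neg : List A

/-- A stream fact `a` viewed as a bodiless rule. -/
def factRule {A : Type} (a : A) : GRule A := ⟨a, [], []⟩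

/-- `lam` is a (local) stratification of the ground program `P`. -/
def IsLocalStratG {A : Type} (P : Set (GRule A)) (lam : A → ℕ) : Prop :=
  ∀ r ∈ P, (∀ b ∈ r.pos, lam b ≤ lam r.head) ∧ (∀ c ∈ r.neg, lam c < lam r.head)

/-- One stratum of bottom-up evaluation: atoms of stratum `n` derivable using `prev`
(the atoms of strata `< n`) for earlier strata and for negation (closed world assumption). -/
inductive StratStep {A : Type} (P : Set (GRule A)) (prev : Set A) (lam : A → ℕ) (n : ℕ) :
    A → Prop
  | intro (r : GRule A) (hr : r ∈ P) (hhead : lam r.head = n)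
      (hpos : ∀ b ∈ r.pos, b ∉ prev → StratStep P prev lam n b)
      (hneg : ∀ c ∈ r.neg, c ∉ prev) : StratStep P prev lam n r.head

/-- The model computed bottom-up through the first `n + 1` strata. -/
def modelUpTo {A : Type} (P : Set (GRule A)) (lam : A → ℕ) : ℕ → Set A
  | 0 => {a | StratStep P ∅ lam 0 a}
  | n + 1 => modelUpTo P lam n ∪ {a | StratStep P (modelUpTo P lam n) lam (n + 1) a}

/-- The perfect model of a stratified program: union of the stratum-wise evaluation. -/
def perfectModel {A : Type} (P : Set (GRule A)) (lam : A → ℕ) : Set A :=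
  ⋃ n, modelUpTo P lam n

/-- `P` is forward-propagating: all body atoms (positive and negated) of a rule have
time-stamps at most the head's time-stamp. -/
def ForwardProp {A : Type} (P : Set (GRule A)) (time : A → ℤ) : Prop :=
  ∀ r ∈ P, (∀ b ∈ r.pos, time b ≤ time r.head) ∧ (∀ c ∈ r.neg, time c ≤ time r.head)

/-- Time-localized soundness of forward-propagating programs: in a forward-propagating,
temporally stratified program `P`, if two streams `S` and `S′` agree on all facts with
time-stamp at most `t`, then for every ground atom with time-stamp ≤ `t`, the atom is in
the perfect model of `P ∪ S` iff it is in the perfect model of `P ∪ S′`. -/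

lemma stratStep_transfer {A : Type} (time : A → ℤ) (t : ℤ)
    (P1 P2 : Set (GRule A)) (lam : A → ℕ)
    (hfp : ∀ r ∈ P1, (∀ b ∈ r.pos, time b ≤ time r.head) ∧
      (∀ c ∈ r.neg, time c ≤ time r.head))
    (hsub : ∀ r ∈ P1, time r.head ≤ t → r ∈ P2)
    (prev1 prev2 : Set A)
    (hprev : ∀ a, time a ≤ t → (a ∈ prev1 ↔ a ∈ prev2))
    (n : ℕ) (a : A) (h : StratStep P1 prev1 lam n a) :
    time a ≤ t → StratStep P2 prev2 lam n a := by
  induction h with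
  | intro r hr hhead hpos hneg ih =>
    intro ht
    refine StratStep.intro r (hsub r hr ht) hhead ?_ ?_
    · intro b hb hb2
      have htb := ((hfp r hr).1 b hb).trans ht
      have hb1 : b ∉ prev1 := fun h => hb2 ((hprev b htb).1 h)
      exact ih b hb hb1 htb
    · intro c hc h
      exact hneg c hc ((hprev c (((hfp r hr).2 c hc).trans ht)).2 h)

lemma modelUpTo_agree {A : Type} (time : A → ℤ) (t : ℤ)
    (P : Set (GRule A)) (lam : A → ℕ)
    (hfp : ForwardProp P time)
    (S S' : Set A)
    (hagree : ∀ a : A, time a ≤ t → (a ∈ S ↔ a ∈ S')) :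
    ∀ n, ∀ a : A, time a ≤ t →
      (a ∈ modelUpTo (P ∪ factRule '' S) lam n ↔
        a ∈ modelUpTo (P ∪ factRule '' S') lam n) := by
  have hfp1 : ∀ (T : Set A), ∀ r ∈ P ∪ factRule '' T,
      (∀ b ∈ r.pos, time b ≤ time r.head) ∧ (∀ c ∈ r.neg, time c ≤ time r.head) := by
    rintro T r (hr | ⟨a, _, rfl⟩)
    · exact hfp r hr
    · exact ⟨fun b hb => by simp [factRule] at hb, fun c hc => by simp [factRule] at hc⟩
  have hsub : ∀ (T T' : Set A), (∀ a : A, time a ≤ t → (a ∈ T ↔ a ∈ T')) →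
      ∀ r ∈ P ∪ factRule '' T, time r.head ≤ t → r ∈ P ∪ factRule '' T' := by
    rintro T T' hTT r (hr | ⟨a, ha, rfl⟩) ht
    · exact Or.inl hr
    · exact Or.inr ⟨a, (hTT a ht).1 ha, rfl⟩
  intro n
  induction n with
  | zero =>
    intro a ht
    constructor
    · exact fun h => stratStep_transfer time t _ _ lam (hfp1 S) (hsub S S' hagree)
        ∅ ∅ (fun _ _ => Iff.rfl) 0 a h ht
    · exact fun h => stratStep_transfer time t _ _ lam (hfp1 S')
        (hsub S' S fun a ha => (hagree a ha).symm) ∅ ∅ (fun _ _ => Iff.rfl) 0 a h ht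
  | succ n ih =>
    intro a ht
    constructor
    · rintro (h | h)
      · exact Or.inl ((ih a ht).1 h)
      · exact Or.inr (stratStep_transfer time t _ _ lam (hfp1 S) (hsub S S' hagree)
          _ _ ih _ a h ht)
    · rintro (h | h)
      · exact Or.inl ((ih a ht).2 h)
      · exact Or.inr (stratStep_transfer time t _ _ lam (hfp1 S')
          (hsub S' S fun a ha => (hagree a ha).symm)
          _ _ (fun b hb => (ih b hb).symm) _ a h ht)

theorem time_localized_soundness (A : Type) (time : A → ℤ)
    (P : Set (GRule A)) (lam : A → ℕ)
    (hfp : ForwardProp P time) (hstrat : IsLocalStratG P lam)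
    (S S' : Set A) (t : ℤ)
    (hagree : ∀ a : A, time a ≤ t → (a ∈ S ↔ a ∈ S')) :
    ∀ a : A, time a ≤ t →
      (a ∈ perfectModel (P ∪ factRule '' S) lam ↔
        a ∈ perfectModel (P ∪ factRule '' S') lam) := by
  intro a ht
  constructor
  · rintro ⟨s, ⟨n, rfl⟩, h⟩
    exact ⟨_, ⟨n, rfl⟩, (modelUpTo_agree time t P lam hfp S S' hagree n a ht).1 h⟩
  · rintro ⟨s, ⟨n, rfl⟩, h⟩
    exact ⟨_, ⟨n, rfl⟩, (modelUpTo_agree time t P lam hfp S S' hagree n a ht).2 h⟩
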